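/- In the two-bank system where bank u has external assets 2 and debts of weight 2 to each of banks v and w, bank v has external assets 1 and no liabilities, bank w has external assets 0 and a CDS of weight 2 to v with reference entity u, the unique equilibrium recovery rate vector is r_u = 1/2, r_v = 1, r_w = 1. -/
import Mathlib


/-- The paper's recovery-rate function: `R(a,l) = 1` if `a ≥ l`, else `a/l` (so `R(a,0)=1`). -/
noncomputable def Rfun (a l : ℝ) : ℝ := if a ≥ l then 1 else a / l

/-- in the system where `u` has external assets 2 and debts of weight 2 to `v` and
`w`, `v` has external assets 1 and no liabilities, and `w` has a CDS of weight 2 to `v` with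
reference entity `u`, the unique equilibrium is `r_u = 1/2, r_v = 1, r_w = 1`.
Here `a_u = 2, l_u = 4`; `a_v = 1 + 2 r_u + r_w · 2(1-r_u), l_v = 0`;
`a_w = 2 r_u, l_w = 2(1-r_u)`. -/
theorem stmt0 (ru rv rw : ℝ)
    (hru : ru ∈ Set.Icc (0:ℝ) 1) (hrv : rv ∈ Set.Icc (0:ℝ) 1) (hrw : rw ∈ Set.Icc (0:ℝ) 1) :
    (ru = Rfun 2 4 ∧
     rv = Rfun (1 + 2 * ru + rw * (2 * (1 - ru))) 0 ∧
     rw = Rfun (2 * ru) (2 * (1 - ru)))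
    ↔ (ru = 1/2 ∧ rv = 1 ∧ rw = 1) := by
  constructor
  · rintro ⟨h1, h2, h3⟩
    have hru' : ru = 1/2 := by
      rw [Rfun] at h1; norm_num at h1; exact h1
    subst hru'
    refine ⟨rfl, ?_, ?_⟩
    · rw [Rfun] at h2
      norm_num at h2
      rwa [if_pos (by linarith [hrw.1])] at h2
    · rw [Rfun] at h3
      norm_num at h3
      exact h3
  · rintro ⟨h1, h2, h3⟩
    subst h1; subst h2; subst h3
    refine ⟨?_, ?_, ?_⟩ <;> rw [Rfun] <;> norm_num
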